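/- arXiv:2505.21869 — 3 statements merged into one kernel-verified Lean document; each statement's English description precedes it below -/
import Mathlib

section
/- Let f(x,y) = arcsinh(e^y · cos x) for (x,y) ∈ ℝ². Then f satisfies the zero-mean-curvature equation (1 − f_y²)·f_xx + 2·f_x·f_y·f_xy + (1 − f_x²)·f_yy = 0 at every point of ℝ². -/
noncomputable def scherkF : ℝ → ℝ → ℝ := fun x y => Real.arsinh (Real.exp y * Real.cos x)

noncomputable def scherkFx : ℝ → ℝ → ℝ := fun x y => deriv (fun x' => scherkF x' y) x
noncomputable def scherkFy : ℝ → ℝ → ℝ := fun x y => deriv (fun y' => scherkF x y') y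
noncomputable def scherkFxx : ℝ → ℝ → ℝ := fun x y => deriv (fun x' => scherkFx x' y) x
noncomputable def scherkFxy : ℝ → ℝ → ℝ := fun x y => deriv (fun y' => scherkFx x y') y
noncomputable def scherkFyy : ℝ → ℝ → ℝ := fun x y => deriv (fun y' => scherkFy x y') y

private lemma arsinh_comp {u' t : ℝ} {U : ℝ → ℝ} (hU : HasDerivAt U u' t) :
    HasDerivAt (fun t => Real.arsinh (U t)) (u' / Real.sqrt (1 + U t ^ 2)) t := by
  have h := (Real.hasDerivAt_arsinh (U t)).comp t hU
  rw [← div_eq_inv_mul] at h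
  exact h

private lemma div_sqrt_deriv {n' d' t : ℝ} {N D : ℝ → ℝ}
    (hN : HasDerivAt N n' t) (hD : HasDerivAt D d' t) :
    HasDerivAt (fun t => N t / Real.sqrt (1 + D t ^ 2))
      ((n' * Real.sqrt (1 + D t ^ 2)
        - N t * (D t * d' / Real.sqrt (1 + D t ^ 2))) / (1 + D t ^ 2)) t := by
  have hpos : 0 < 1 + D t ^ 2 := by positivity
  have hq : HasDerivAt (fun t => 1 + D t ^ 2) (2 * D t * d') t := by
    have h := (hD.pow 2).const_add (1 : ℝ)
    simpa [mul_comm, mul_assoc, mul_left_comm] using h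
  have hs : HasDerivAt (fun t => Real.sqrt (1 + D t ^ 2))
      (D t * d' / Real.sqrt (1 + D t ^ 2)) t := by
    have h := (Real.hasDerivAt_sqrt (ne_of_gt hpos)).comp t hq
    refine h.congr_deriv ?_
    field_simp
  have hsne : Real.sqrt (1 + D t ^ 2) ≠ 0 := ne_of_gt (Real.sqrt_pos.mpr hpos)
  have h := hN.div hs hsne
  refine h.congr_deriv ?_
  rw [Real.sq_sqrt hpos.le]

private lemma fx_eq (x y : ℝ) :
    scherkFx x y = -(Real.exp y * Real.sin x) / Real.sqrt (1 + (Real.exp y * Real.cos x) ^ 2) := by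
  have hU : HasDerivAt (fun x' => Real.exp y * Real.cos x') (Real.exp y * (-Real.sin x)) x :=
    (Real.hasDerivAt_cos x).const_mul _
  have h := arsinh_comp hU
  unfold scherkFx scherkF
  rw [h.deriv]
  ring_nf

private lemma fy_eq (x y : ℝ) :
    scherkFy x y = Real.exp y * Real.cos x / Real.sqrt (1 + (Real.exp y * Real.cos x) ^ 2) := by
  have hU : HasDerivAt (fun y' => Real.exp y' * Real.cos x) (Real.exp y * Real.cos x) y :=
    (Real.hasDerivAt_exp y).mul_const _
  have h := arsinh_comp hU
  unfold scherkFy scherkF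
  rw [h.deriv]

theorem scherk_zmc (x y : ℝ) :
    (1 - scherkFy x y ^ 2) * scherkFxx x y
      + 2 * scherkFx x y * scherkFy x y * scherkFxy x y
      + (1 - scherkFx x y ^ 2) * scherkFyy x y = 0 := by
  have hxx : scherkFxx x y =
      ((-(Real.exp y * Real.cos x)) * Real.sqrt (1 + (Real.exp y * Real.cos x) ^ 2)
        - (-(Real.exp y * Real.sin x)) * ((Real.exp y * Real.cos x) * (Real.exp y * (-Real.sin x))
            / Real.sqrt (1 + (Real.exp y * Real.cos x) ^ 2)))
        / (1 + (Real.exp y * Real.cos x) ^ 2) := by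
    have hN : HasDerivAt (fun x' => -(Real.exp y * Real.sin x')) (-(Real.exp y * Real.cos x)) x :=
      ((Real.hasDerivAt_sin x).const_mul (Real.exp y)).neg
    have hD : HasDerivAt (fun x' => Real.exp y * Real.cos x') (Real.exp y * (-Real.sin x)) x :=
      (Real.hasDerivAt_cos x).const_mul _
    have hfun : (fun x' => scherkFx x' y) =
        fun x' => -(Real.exp y * Real.sin x') / Real.sqrt (1 + (Real.exp y * Real.cos x') ^ 2) :=
      funext fun x' => fx_eq x' y
    unfold scherkFxx
    rw [hfun, (div_sqrt_deriv hN hD).deriv]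
  have hxy : scherkFxy x y =
      ((-(Real.exp y * Real.sin x)) * Real.sqrt (1 + (Real.exp y * Real.cos x) ^ 2)
        - (-(Real.exp y * Real.sin x)) * ((Real.exp y * Real.cos x) * (Real.exp y * Real.cos x)
            / Real.sqrt (1 + (Real.exp y * Real.cos x) ^ 2)))
        / (1 + (Real.exp y * Real.cos x) ^ 2) := by
    have hN : HasDerivAt (fun y' => -(Real.exp y' * Real.sin x)) (-(Real.exp y * Real.sin x)) y :=
      ((Real.hasDerivAt_exp y).mul_const (Real.sin x)).neg
    have hD : HasDerivAt (fun y' => Real.exp y' * Real.cos x) (Real.exp y * Real.cos x) y :=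
      (Real.hasDerivAt_exp y).mul_const _
    have hfun : (fun y' => scherkFx x y') =
        fun y' => -(Real.exp y' * Real.sin x) / Real.sqrt (1 + (Real.exp y' * Real.cos x) ^ 2) :=
      funext fun y' => fx_eq x y'
    unfold scherkFxy
    rw [hfun, (div_sqrt_deriv hN hD).deriv]
  have hyy : scherkFyy x y =
      ((Real.exp y * Real.cos x) * Real.sqrt (1 + (Real.exp y * Real.cos x) ^ 2)
        - (Real.exp y * Real.cos x) * ((Real.exp y * Real.cos x) * (Real.exp y * Real.cos x)
            / Real.sqrt (1 + (Real.exp y * Real.cos x) ^ 2)))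
        / (1 + (Real.exp y * Real.cos x) ^ 2) := by
    have hN : HasDerivAt (fun y' => Real.exp y' * Real.cos x) (Real.exp y * Real.cos x) y :=
      (Real.hasDerivAt_exp y).mul_const _
    have hfun : (fun y' => scherkFy x y') =
        fun y' => Real.exp y' * Real.cos x / Real.sqrt (1 + (Real.exp y' * Real.cos x) ^ 2) :=
      funext fun y' => fy_eq x y'
    unfold scherkFyy
    rw [hfun, (div_sqrt_deriv hN hN).deriv]
  have hpos : (0:ℝ) < 1 + (Real.exp y * Real.cos x) ^ 2 := by positivity
  have hS0 : Real.sqrt (1 + (Real.exp y * Real.cos x) ^ 2) ≠ 0 :=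
    ne_of_gt (Real.sqrt_pos.mpr hpos)
  have hS2 : Real.sqrt (1 + (Real.exp y * Real.cos x) ^ 2) ^ 2
      = 1 + (Real.exp y * Real.cos x) ^ 2 := Real.sq_sqrt hpos.le
  rw [fx_eq, fy_eq, hxx, hxy, hyy]
  set S := Real.sqrt (1 + (Real.exp y * Real.cos x) ^ 2) with hSdef
  rw [← hS2]
  field_simp
  ring
end

section
/- Let f(x,y) = arcsinh(e^y · cos x). Then the region D = {(x,y) ∈ ℝ² : f_x(x,y)² + f_y(x,y)² < 1} equals {(x,y) : e^{2y}(1 − cos 2x) < 2}, and D is path-connected. -/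
lemma scherkFx_eq (x y : ℝ) :
    scherkFx x y = (Real.exp y * (-Real.sin x)) / Real.sqrt (1 + (Real.exp y * Real.cos x)^2) := by
  have h1 : HasDerivAt (fun x' => Real.exp y * Real.cos x') (Real.exp y * (-Real.sin x)) x :=
    (Real.hasDerivAt_cos x).const_mul _
  have h2 := (Real.hasDerivAt_arsinh (Real.exp y * Real.cos x)).comp x h1
  simp only [Function.comp_def] at h2
  simp only [scherkFx, scherkF]
  rw [h2.deriv, div_eq_inv_mul]

lemma scherkFy_eq (x y : ℝ) :
    scherkFy x y = (Real.exp y * Real.cos x) / Real.sqrt (1 + (Real.exp y * Real.cos x)^2) := by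
  have h1 : HasDerivAt (fun y' => Real.exp y' * Real.cos x) (Real.exp y * Real.cos x) y :=
    (Real.hasDerivAt_exp y).mul_const _
  have h2 := (Real.hasDerivAt_arsinh (Real.exp y * Real.cos x)).comp y h1
  simp only [Function.comp_def] at h2
  simp only [scherkFy, scherkF]
  rw [h2.deriv, div_eq_inv_mul]

lemma scherk_mem_iff (x y : ℝ) :
    scherkFx x y ^ 2 + scherkFy x y ^ 2 < 1 ↔
      Real.exp (2 * y) * (1 - Real.cos (2 * x)) < 2 := by
  rw [scherkFx_eq, scherkFy_eq]
  set E := Real.exp y with hE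
  have hEpos : 0 < E := Real.exp_pos y
  have hQnn : (0:ℝ) < 1 + (E * Real.cos x)^2 := by positivity
  have hQ : Real.sqrt (1 + (E * Real.cos x)^2) ^ 2 = 1 + (E * Real.cos x)^2 :=
    Real.sq_sqrt hQnn.le
  have hQpos : 0 < Real.sqrt (1 + (E * Real.cos x)^2) := Real.sqrt_pos.mpr hQnn
  have hsum : (E * (-Real.sin x) / Real.sqrt (1 + (E * Real.cos x)^2)) ^ 2
      + (E * Real.cos x / Real.sqrt (1 + (E * Real.cos x)^2)) ^ 2
      = E^2 / (1 + (E * Real.cos x)^2) := by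
    rw [div_pow, div_pow, hQ, ← add_div]
    congr 1
    have := Real.sin_sq_add_cos_sq x
    ring_nf
    nlinarith [this]
  rw [hsum, div_lt_one hQnn]
  have hc2 : Real.cos (2 * x) = 2 * Real.cos x ^ 2 - 1 := Real.cos_two_mul x
  have he2 : Real.exp (2 * y) = E ^ 2 := by
    rw [hE, ← Real.exp_nat_mul]
    norm_num
  rw [hc2, he2]
  constructor <;> intro h <;> nlinarith [h]

lemma joinedIn_of_segment {S : Set (ℝ × ℝ)} {p q : ℝ × ℝ} (h : segment ℝ p q ⊆ S) :
    JoinedIn S p q := by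
  have hc : IsPathConnected (segment ℝ p q) :=
    (convex_segment p q).isPathConnected ⟨p, left_mem_segment ℝ p q⟩
  exact (hc.joinedIn p (left_mem_segment ℝ p q) q (right_mem_segment ℝ p q)).mono h

theorem scherk_spacelike_region :
    {p : ℝ × ℝ | scherkFx p.1 p.2 ^ 2 + scherkFy p.1 p.2 ^ 2 < 1}
      = {p : ℝ × ℝ | Real.exp (2 * p.2) * (1 - Real.cos (2 * p.1)) < 2} ∧
    IsPathConnected {p : ℝ × ℝ | scherkFx p.1 p.2 ^ 2 + scherkFy p.1 p.2 ^ 2 < 1} := by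
  have heq : {p : ℝ × ℝ | scherkFx p.1 p.2 ^ 2 + scherkFy p.1 p.2 ^ 2 < 1}
      = {p : ℝ × ℝ | Real.exp (2 * p.2) * (1 - Real.cos (2 * p.1)) < 2} := by
    ext p
    exact scherk_mem_iff p.1 p.2
  refine ⟨heq, ?_⟩
  rw [heq]
  set S : Set (ℝ × ℝ) := {p : ℝ × ℝ | Real.exp (2 * p.2) * (1 - Real.cos (2 * p.1)) < 2} with hS
  have h0 : ((0, 0) : ℝ × ℝ) ∈ S := by
    simp [hS, Set.mem_setOf_eq]
  refine ⟨(0, 0), h0, ?_⟩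
  rintro ⟨x, y⟩ hp
  simp only [hS, Set.mem_setOf_eq] at hp
  set m : ℝ := min y (-1) with hm
  have hmy : m ≤ y := min_le_left _ _
  have hm1 : m ≤ -1 := min_le_right _ _
  -- segment from (0,0) to (0,m)
  have j1 : JoinedIn S ((0,0) : ℝ × ℝ) ((0, m) : ℝ × ℝ) := by
    apply joinedIn_of_segment
    rintro r ⟨u, v, hu, hv, huv, rfl⟩
    simp only [hS, Set.mem_setOf_eq, Prod.fst_add, Prod.snd_add, Prod.smul_fst, Prod.smul_snd,
      smul_eq_mul]
    norm_num
  -- segment from (0,m) to (x,m)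
  have j2 : JoinedIn S ((0, m) : ℝ × ℝ) ((x, m) : ℝ × ℝ) := by
    apply joinedIn_of_segment
    rintro r ⟨u, v, hu, hv, huv, rfl⟩
    simp only [hS, Set.mem_setOf_eq, Prod.fst_add, Prod.snd_add, Prod.smul_fst, Prod.smul_snd,
      smul_eq_mul]
    have hsnd : u * m + v * m = m := by
      have : (u + v) * m = m := by rw [huv]; ring
      linarith [this]
    rw [hsnd]
    have he1 : Real.exp (2 * m) < 1 := by
      apply Real.exp_lt_one_iff.mpr
      linarith
    have hep : 0 < Real.exp (2 * m) := Real.exp_pos _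
    have hcb : -1 ≤ Real.cos (2 * (u * 0 + v * x)) := Real.neg_one_le_cos _
    nlinarith [mul_nonneg hep.le (by linarith : (0:ℝ) ≤ 1 + Real.cos (2 * (u * 0 + v * x)))]
  -- segment from (x,m) to (x,y)
  have j3 : JoinedIn S ((x, m) : ℝ × ℝ) ((x, y) : ℝ × ℝ) := by
    apply joinedIn_of_segment
    rintro r ⟨u, v, hu, hv, huv, rfl⟩
    simp only [hS, Set.mem_setOf_eq, Prod.fst_add, Prod.snd_add, Prod.smul_fst, Prod.smul_snd,
      smul_eq_mul]
    have hfst : u * x + v * x = x := by rw [← add_mul, huv, one_mul]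
    rw [hfst]
    have ht : u * m + v * y ≤ y := by nlinarith
    have hcb : Real.cos (2 * x) ≤ 1 := Real.cos_le_one _
    have hee : Real.exp (2 * (u * m + v * y)) ≤ Real.exp (2 * y) :=
      Real.exp_le_exp.mpr (by linarith)
    calc Real.exp (2 * (u * m + v * y)) * (1 - Real.cos (2 * x))
        ≤ Real.exp (2 * y) * (1 - Real.cos (2 * x)) := by
          apply mul_le_mul_of_nonneg_right hee (by linarith)
      _ < 2 := hp
  exact (j1.trans j2).trans j3
end

section
/- Define Log on the set {z = u + jv : u² ≠ v²} by Log(z) = log√|u² − v²| + j·log√(|u+v|/|u−v|). Then for every split-complex z, Log(exp z) = z, where exp(u+jv) = e^u(cosh v + j sinh v). Moreover, if N²(z) > 0 and Re(z) > 0, then exp(Log z) = z. -/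
/-- Exponential of a split-complex number `u + jv`. -/
noncomputable def splitExp : ℝ × ℝ → ℝ × ℝ := fun z =>
  (Real.exp z.1 * Real.cosh z.2, Real.exp z.1 * Real.sinh z.2)

/-- Logarithm of a split-complex number `u + jv` with `u² ≠ v²`. -/
noncomputable def splitLog : ℝ × ℝ → ℝ × ℝ := fun z =>
  (Real.log (Real.sqrt |z.1 ^ 2 - z.2 ^ 2|),
    Real.log (Real.sqrt (|z.1 + z.2| / |z.1 - z.2|)))

theorem splitLog_splitExp :
    (∀ z : ℝ × ℝ, splitLog (splitExp z) = z) ∧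
    (∀ z : ℝ × ℝ, z.1 ^ 2 - z.2 ^ 2 > 0 → z.1 > 0 → splitExp (splitLog z) = z) := by
  constructor
  · rintro ⟨u, v⟩
    simp only [splitLog, splitExp]
    have h1 : (Real.exp u * Real.cosh v) ^ 2 - (Real.exp u * Real.sinh v) ^ 2
        = Real.exp u ^ 2 := by
      have := Real.cosh_sq_sub_sinh_sq v
      ring_nf
      nlinarith [this]
    have h2 : Real.exp u * Real.cosh v + Real.exp u * Real.sinh v = Real.exp (u + v) := by
      rw [← mul_add, Real.cosh_add_sinh, ← Real.exp_add]
    have h3 : Real.exp u * Real.cosh v - Real.exp u * Real.sinh v = Real.exp (u - v) := by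
      rw [← mul_sub, Real.cosh_sub_sinh, ← Real.exp_add]; ring_nf
    rw [h1, h2, h3, abs_of_pos (pow_pos (Real.exp_pos u) 2),
      Real.sqrt_sq (Real.exp_pos u).le, Real.log_exp,
      abs_of_pos (Real.exp_pos _), abs_of_pos (Real.exp_pos _),
      ← Real.exp_sub]
    have : u + v - (u - v) = 2 * v := by ring
    rw [this]
    have : Real.exp (2 * v) = Real.exp v ^ 2 := by
      rw [← Real.exp_nat_mul]; norm_num [mul_comm]
    rw [this, Real.sqrt_sq (Real.exp_pos v).le, Real.log_exp]
  · rintro ⟨u, v⟩ h hu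
    simp only at h hu
    have hs : (0:ℝ) < u + v := by nlinarith
    have ht : (0:ℝ) < u - v := by nlinarith
    simp only [splitLog, splitExp]
    set p := Real.sqrt (u + v) with hp
    set q := Real.sqrt (u - v) with hq
    have hp0 : 0 < p := Real.sqrt_pos.2 hs
    have hq0 : 0 < q := Real.sqrt_pos.2 ht
    have hp2 : p ^ 2 = u + v := Real.sq_sqrt hs.le
    have hq2 : q ^ 2 = u - v := Real.sq_sqrt ht.le
    have e1 : Real.sqrt |u ^ 2 - v ^ 2| = p * q := by
      rw [abs_of_pos h, show u ^ 2 - v ^ 2 = (u + v) * (u - v) by ring,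
        Real.sqrt_mul hs.le]
    have e2 : Real.sqrt (|u + v| / |u - v|) = p / q := by
      rw [abs_of_pos hs, abs_of_pos ht, Real.sqrt_div hs.le]
    rw [e1, e2, Real.exp_log (mul_pos hp0 hq0)]
    have hcosh : Real.cosh (Real.log (p / q)) = (p / q + q / p) / 2 := by
      rw [Real.cosh_eq, Real.exp_log (div_pos hp0 hq0), Real.exp_neg,
        Real.exp_log (div_pos hp0 hq0), inv_div]
    have hsinh : Real.sinh (Real.log (p / q)) = (p / q - q / p) / 2 := by
      rw [Real.sinh_eq, Real.exp_log (div_pos hp0 hq0), Real.exp_neg,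
        Real.exp_log (div_pos hp0 hq0), inv_div]
    rw [hcosh, hsinh]
    have hpne := hp0.ne'
    have hqne := hq0.ne'
    simp only [Prod.mk.injEq]
    constructor
    · field_simp
      linear_combination hp2 + hq2
    · field_simp
      linear_combination hp2 - hq2
end
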